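/- Let (X, 𝔪) be a measure space, (φ_j)_{j∈ℕ} a Hilbert basis (orthonormal basis) of the complex Hilbert space L²(X, 𝔪), ψ ∈ L²(X, 𝔪) with ψ ≠ 0, A ⊆ X a measurable set, λ : ℕ → ℝ, μ ∈ ℝ, ε > 0, b > 1, and k a positive integer. Assume that (|⟨ψ, φ_j⟩|²·(λ_j − μ)²)_{j∈ℕ} is summable with Σ_j |⟨ψ, φ_j⟩|²·(λ_j − μ)² ≤ ε²·‖ψ‖², and that the set J := { j ∈ ℕ : |λ_j − μ| ≤ bε } is finite with at most k elements. Then there exists j ∈ J such that ‖1_A·φ_j‖ ≥ (1/√k)·( ‖1_A·ψ‖/‖ψ‖ − 1/b ). -/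

import Mathlib

open MeasureTheory


noncomputable def restrictL2 {X : Type*} [MeasurableSpace X] (m : Measure X) (A : Set X) :
    Lp ℂ 2 m →ₗ[ℂ] Lp ℂ 2 (m.restrict A) where
  toFun f := ((Lp.memLp f).restrict A).toLp f
  map_add' f g := by
    rw [MemLp.toLp_congr _ ((Lp.memLp f).restrict A |>.add ((Lp.memLp g).restrict A))
      ((Lp.coeFn_add f g).filter_mono (ae_mono Measure.restrict_le_self)),
      MemLp.toLp_add]
  map_smul' c f := by
    dsimp only [RingHom.id_apply]
    rw [MemLp.toLp_congr _ (((Lp.memLp f).restrict A).const_smul c)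
      ((Lp.coeFn_smul c f).filter_mono (ae_mono Measure.restrict_le_self)),
      MemLp.toLp_const_smul]

lemma normsq_L2 {X : Type*} [MeasurableSpace X] {ν : Measure X} (f : Lp ℂ 2 ν) :
    ‖f‖ ^ 2 = ∫ x, ‖f x‖ ^ 2 ∂ν := by
  have h1 : (RCLike.re (inner ℂ f f : ℂ)) = ‖f‖ ^ 2 := inner_self_eq_norm_sq f
  rw [← h1, MeasureTheory.L2.inner_def]
  rw [← integral_re (MeasureTheory.L2.integrable_inner f f)]
  congr 1
  ext x
  simpa using (inner_self_eq_norm_sq (𝕜 := ℂ) (f x))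

lemma restrictL2_normsq {X : Type*} [MeasurableSpace X] (m : Measure X) (A : Set X)
    (f : Lp ℂ 2 m) : ‖restrictL2 m A f‖ ^ 2 = ∫ x in A, ‖f x‖ ^ 2 ∂m := by
  rw [normsq_L2]
  refine integral_congr_ae ?_
  show (fun x => ‖(((Lp.memLp f).restrict A).toLp f : X → ℂ) x‖ ^ 2) =ᵐ[m.restrict A] _
  exact (((Lp.memLp f).restrict A).coeFn_toLp).mono fun x hx => by simp only []; rw [hx]

lemma restrictL2_norm_le {X : Type*} [MeasurableSpace X] (m : Measure X) (A : Set X)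
    (f : Lp ℂ 2 m) : ‖restrictL2 m A f‖ ≤ ‖f‖ := by
  rw [show restrictL2 m A f = ((Lp.memLp f).restrict A).toLp f from rfl, Lp.norm_toLp,
    Lp.norm_def]
  exact ENNReal.toReal_mono (Lp.eLpNorm_ne_top f)
    (eLpNorm_mono_measure _ Measure.restrict_le_self)

lemma aux_arith (T M p sk b : ℝ) (hp : 0 < p) (hb : 1 < b) (hsk : 0 < sk)
    (h : T ≤ sk * p * M + p / b) : 1 / sk * (T / p - 1 / b) ≤ M := by
  have hb0 : (0:ℝ) < b := lt_trans one_pos hb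
  rw [div_sub_div _ _ (ne_of_gt hp) (ne_of_gt hb0), one_div, inv_mul_le_iff₀ hsk,
    div_le_iff₀ (by positivity)]
  have h2 : T * b ≤ sk * p * M * b + p := by
    have h3 := mul_le_mul_of_nonneg_right h hb0.le
    calc T * b ≤ (sk * p * M + p / b) * b := h3
      _ = sk * p * M * b + p := by field_simp
  nlinarith [h2]

set_option maxHeartbeats 1000000 in
theorem stmt_10 {X : Type*} [MeasurableSpace X] (m : Measure X)
    (φ : HilbertBasis ℕ ℂ (Lp ℂ 2 m)) (ψ : Lp ℂ 2 m) (hψ : ψ ≠ 0)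
    (A : Set X) (hA : MeasurableSet A)
    (lam : ℕ → ℝ) (μ ε b : ℝ) (hε : 0 < ε) (hb : 1 < b) (k : ℕ) (hk : 0 < k)
    (hsum : Summable fun j => ‖(inner ℂ ψ (φ j) : ℂ)‖ ^ 2 * (lam j - μ) ^ 2)
    (hbound : ∑' j, ‖(inner ℂ ψ (φ j) : ℂ)‖ ^ 2 * (lam j - μ) ^ 2 ≤ ε ^ 2 * ‖ψ‖ ^ 2)
    (hJfin : {j : ℕ | |lam j - μ| ≤ b * ε}.Finite)
    (hJcard : hJfin.toFinset.card ≤ k) :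
    ∃ j : ℕ, |lam j - μ| ≤ b * ε ∧
      Real.sqrt (∫ x in A, ‖(φ j) x‖ ^ 2 ∂m)
        ≥ 1 / Real.sqrt k *
            (Real.sqrt (∫ x in A, ‖ψ x‖ ^ 2 ∂m) / ‖ψ‖ - 1 / b) := by
  classical
  have hψpos : (0:ℝ) < ‖ψ‖ := norm_pos_iff.2 hψ
  have hb0 : (0:ℝ) < b := lt_trans one_pos hb
  have hnc : ∀ j, ‖(inner ℂ ψ (φ j) : ℂ)‖ = ‖(inner ℂ (φ j) ψ : ℂ)‖ :=
    fun j => norm_inner_symm _ _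
  simp only [hnc] at hsum hbound
  -- Parseval
  have hP : HasSum (fun j => ‖(inner ℂ (φ j) ψ : ℂ)‖ ^ 2) (‖ψ‖ ^ 2) := by
    have h1 := (φ.hasSum_inner_mul_inner ψ ψ).mapL (RCLike.reCLM (K := ℂ))
    simp only [RCLike.reCLM_apply] at h1
    have e : (fun j => RCLike.re ((inner ℂ ψ (φ j) : ℂ) * (inner ℂ (φ j) ψ : ℂ)))
        = fun j => ‖(inner ℂ (φ j) ψ : ℂ)‖ ^ 2 := by
      funext j
      rw [← inner_conj_symm ψ (φ j), RCLike.conj_mul, ← RCLike.ofReal_pow,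
        RCLike.ofReal_re]
    rw [e, inner_self_eq_norm_sq] at h1
    exact h1
  have hS : Summable fun j => ‖(inner ℂ (φ j) ψ : ℂ)‖ ^ 2 := hP.summable
  have hStsum : ∑' j, ‖(inner ℂ (φ j) ψ : ℂ)‖ ^ 2 = ‖ψ‖ ^ 2 := hP.tsum_eq
  -- J is nonempty
  have hsq : ∀ j, b * ε < |lam j - μ| →
      (b*ε)^2 * ‖(inner ℂ (φ j) ψ : ℂ)‖^2 ≤ ‖(inner ℂ (φ j) ψ : ℂ)‖^2 * (lam j - μ)^2 := by
    intro j hj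
    have h0 : (0:ℝ) ≤ b*ε := by positivity
    have h2 : (b*ε)^2 ≤ (lam j - μ)^2 := by
      calc (b*ε)^2 ≤ |lam j - μ|^2 := pow_le_pow_left₀ h0 hj.le 2
        _ = (lam j - μ)^2 := sq_abs _
    nlinarith [sq_nonneg ‖(inner ℂ (φ j) ψ : ℂ)‖]
  have hJne : ∃ j, |lam j - μ| ≤ b * ε := by
    by_contra h
    push_neg at h
    have h3 : (b*ε)^2 * ‖ψ‖^2 ≤ ε^2 * ‖ψ‖^2 := by
      calc (b*ε)^2 * ‖ψ‖^2 = ∑' j, (b*ε)^2 * ‖(inner ℂ (φ j) ψ : ℂ)‖^2 := by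
            rw [tsum_mul_left, hStsum]
        _ ≤ ∑' j, ‖(inner ℂ (φ j) ψ : ℂ)‖^2 * (lam j - μ)^2 :=
            Summable.tsum_le_tsum (fun j => hsq j (h j)) (hS.mul_left _) hsum
        _ ≤ ε^2 * ‖ψ‖^2 := hbound
    have h4 : (0:ℝ) < ε^2 * ‖ψ‖^2 := by positivity
    have hb2 : (1:ℝ) < b^2 := by nlinarith
    nlinarith [h3, h4, hb2]
  set J : Finset ℕ := hJfin.toFinset with hJ
  have hmemJ : ∀ j, j ∈ J ↔ |lam j - μ| ≤ b * ε := by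
    intro j; rw [hJ, Set.Finite.mem_toFinset]; rfl
  have hJne' : J.Nonempty := by
    obtain ⟨j, hj⟩ := hJne
    exact ⟨j, (hmemJ j).2 hj⟩
  -- tail bound
  have htail : (b*ε)^2 * (‖ψ‖^2 - ∑ j ∈ J, ‖(inner ℂ (φ j) ψ : ℂ)‖^2) ≤ ε^2 * ‖ψ‖^2 := by
    have hcompl : ∑' (j : {x // x ∉ J}), ‖(inner ℂ (φ (↑j : ℕ)) ψ : ℂ)‖^2
        = ‖ψ‖^2 - ∑ j ∈ J, ‖(inner ℂ (φ j) ψ : ℂ)‖^2 := by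
      have h5 := Summable.sum_add_tsum_subtype_compl hS J
      rw [hStsum] at h5
      linarith [h5]
    have hterm : ∀ j : {x // x ∉ J},
        (b*ε)^2 * ‖(inner ℂ (φ (↑j : ℕ)) ψ : ℂ)‖^2
          ≤ ‖(inner ℂ (φ (↑j : ℕ)) ψ : ℂ)‖^2 * (lam ↑j - μ)^2 := by
      rintro ⟨j, hj⟩
      refine hsq j ?_
      by_contra h4; push_neg at h4; exact hj ((hmemJ j).2 h4)
    calc (b*ε)^2 * (‖ψ‖^2 - ∑ j ∈ J, ‖(inner ℂ (φ j) ψ : ℂ)‖^2)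
        = ∑' (j : {x // x ∉ J}), (b*ε)^2 * ‖(inner ℂ (φ (↑j : ℕ)) ψ : ℂ)‖^2 := by
          rw [tsum_mul_left, hcompl]
      _ ≤ ∑' (j : {x // x ∉ J}), ‖(inner ℂ (φ (↑j : ℕ)) ψ : ℂ)‖^2 * (lam ↑j - μ)^2 :=
          Summable.tsum_le_tsum hterm ((hS.mul_left ((b*ε)^2)).subtype _) (hsum.subtype _)
      _ ≤ ∑' j, ‖(inner ℂ (φ j) ψ : ℂ)‖^2 * (lam j - μ)^2 := by
          have h6 := Summable.sum_add_tsum_subtype_compl hsum J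
          have hnn : (0:ℝ) ≤ ∑ j ∈ J, ‖(inner ℂ (φ j) ψ : ℂ)‖^2 * (lam j - μ)^2 :=
            Finset.sum_nonneg fun j _ => by positivity
          linarith [h6]
      _ ≤ ε^2 * ‖ψ‖^2 := hbound
  -- the projection P
  set P : Lp ℂ 2 m := ∑ j ∈ J, (inner ℂ (φ j) ψ : ℂ) • φ j with hPdef
  have hsumJ_le : ∑ j ∈ J, ‖(inner ℂ (φ j) ψ : ℂ)‖^2 ≤ ‖ψ‖^2 := by
    rw [← hStsum]
    exact Summable.sum_le_tsum J (fun i _ => by positivity) hS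
  have hinnerψP : (inner ℂ ψ P : ℂ) = ((∑ j ∈ J, ‖(inner ℂ (φ j) ψ : ℂ)‖^2 : ℝ) : ℂ) := by
    rw [hPdef, inner_sum]
    push_cast
    refine Finset.sum_congr rfl fun i _ => ?_
    rw [inner_smul_right, ← inner_conj_symm ψ (φ i), RCLike.mul_conj]
    norm_cast
  have hinnerPP : (inner ℂ P P : ℂ) = ((∑ j ∈ J, ‖(inner ℂ (φ j) ψ : ℂ)‖^2 : ℝ) : ℂ) := by
    rw [hPdef, φ.orthonormal.inner_sum]
    push_cast
    refine Finset.sum_congr rfl fun i _ => ?_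
    rw [RCLike.conj_mul]
    norm_cast
  have hnormP : ‖P‖^2 = ∑ j ∈ J, ‖(inner ℂ (φ j) ψ : ℂ)‖^2 := by
    rw [← inner_self_eq_norm_sq (𝕜 := ℂ), hinnerPP]
    norm_cast
  have hdiff : ‖ψ - P‖^2 = ‖ψ‖^2 - ∑ j ∈ J, ‖(inner ℂ (φ j) ψ : ℂ)‖^2 := by
    rw [norm_sub_sq (𝕜 := ℂ), hinnerψP, hnormP]
    have hre : RCLike.re ((((∑ j ∈ J, ‖(inner ℂ (φ j) ψ : ℂ)‖^2 : ℝ)) : ℂ))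
        = ∑ j ∈ J, ‖(inner ℂ (φ j) ψ : ℂ)‖^2 := by norm_cast
    rw [hre]
    ring
  have hdiffle : ‖ψ - P‖ ≤ ‖ψ‖ / b := by
    have h6 : ‖ψ - P‖^2 ≤ (‖ψ‖/b)^2 := by
      rw [hdiff, div_pow, le_div_iff₀ (by positivity : (0:ℝ) < b^2)]
      have hε2 : (0:ℝ) < ε^2 := by positivity
      nlinarith [htail, hε2]
    have h7 := Real.sqrt_le_sqrt h6
    rwa [Real.sqrt_sq (norm_nonneg _), Real.sqrt_sq (by positivity)] at h7
  -- Cauchy-Schwarz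
  have hCS : ∑ j ∈ J, ‖(inner ℂ (φ j) ψ : ℂ)‖ ≤ Real.sqrt k * ‖ψ‖ := by
    have h7 : (∑ j ∈ J, ‖(inner ℂ (φ j) ψ : ℂ)‖)^2
        ≤ (J.card : ℝ) * ∑ j ∈ J, ‖(inner ℂ (φ j) ψ : ℂ)‖^2 :=
      sq_sum_le_card_mul_sum_sq
    have h8 : (∑ j ∈ J, ‖(inner ℂ (φ j) ψ : ℂ)‖)^2 ≤ (k:ℝ) * ‖ψ‖^2 := by
      have hcard : (J.card : ℝ) ≤ (k : ℝ) := by exact_mod_cast hJcard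
      have hnn : (0:ℝ) ≤ ∑ j ∈ J, ‖(inner ℂ (φ j) ψ : ℂ)‖^2 :=
        Finset.sum_nonneg fun j _ => by positivity
      nlinarith [hsumJ_le]
    have h9 := Real.sqrt_le_sqrt h8
    rwa [Real.sqrt_sq (Finset.sum_nonneg fun j _ => norm_nonneg _),
      Real.sqrt_mul (by positivity) _, Real.sqrt_sq (norm_nonneg ψ)] at h9
  -- pick the maximizer
  obtain ⟨j₀, hj₀J, hmax⟩ := J.exists_max_image (fun j => ‖restrictL2 m A (φ j)‖) hJne'
  have hM0 : (0:ℝ) ≤ ‖restrictL2 m A (φ j₀)‖ := norm_nonneg _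
  -- chain
  have hchain : ‖restrictL2 m A ψ‖
      ≤ Real.sqrt k * ‖ψ‖ * ‖restrictL2 m A (φ j₀)‖ + ‖ψ‖ / b := by
    have e1 : ψ = P + (ψ - P) := by abel
    calc ‖restrictL2 m A ψ‖
        = ‖restrictL2 m A (P + (ψ - P))‖ := by rw [← e1]
      _ = ‖restrictL2 m A P + restrictL2 m A (ψ - P)‖ := by rw [map_add]
      _ ≤ ‖restrictL2 m A P‖ + ‖restrictL2 m A (ψ - P)‖ := norm_add_le _ _
      _ ≤ ‖restrictL2 m A P‖ + ‖ψ - P‖ := by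
          linarith [restrictL2_norm_le m A (ψ - P)]
      _ ≤ (∑ j ∈ J, ‖(inner ℂ (φ j) ψ : ℂ)‖ * ‖restrictL2 m A (φ j)‖) + ‖ψ - P‖ := by
          have e2 : restrictL2 m A P
              = ∑ j ∈ J, (inner ℂ (φ j) ψ : ℂ) • restrictL2 m A (φ j) := by
            rw [hPdef, map_sum]
            exact Finset.sum_congr rfl fun j _ => map_smul _ _ _
          rw [e2]
          refine add_le_add_left ((norm_sum_le _ _).trans ?_) _
          exact le_of_eq (Finset.sum_congr rfl fun j _ => norm_smul _ _)
      _ ≤ (∑ j ∈ J, ‖(inner ℂ (φ j) ψ : ℂ)‖ * ‖restrictL2 m A (φ j₀)‖) + ‖ψ - P‖ := by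
          refine add_le_add_left (Finset.sum_le_sum fun j hj => ?_) _
          exact mul_le_mul_of_nonneg_left (hmax j hj) (norm_nonneg _)
      _ = (∑ j ∈ J, ‖(inner ℂ (φ j) ψ : ℂ)‖) * ‖restrictL2 m A (φ j₀)‖ + ‖ψ - P‖ := by
          rw [Finset.sum_mul]
      _ ≤ Real.sqrt k * ‖ψ‖ * ‖restrictL2 m A (φ j₀)‖ + ‖ψ‖ / b := by
          have h10 := mul_le_mul_of_nonneg_right hCS hM0
          linarith [hdiffle]
  -- conclude
  have hTpsi : Real.sqrt (∫ x in A, ‖ψ x‖ ^ 2 ∂m) = ‖restrictL2 m A ψ‖ := by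
    rw [← restrictL2_normsq, Real.sqrt_sq (norm_nonneg _)]
  have hTphi : Real.sqrt (∫ x in A, ‖(φ j₀) x‖ ^ 2 ∂m) = ‖restrictL2 m A (φ j₀)‖ := by
    rw [← restrictL2_normsq, Real.sqrt_sq (norm_nonneg _)]
  refine ⟨j₀, (hmemJ j₀).1 hj₀J, ?_⟩
  rw [hTphi, hTpsi, ge_iff_le]
  have hk1 : (1:ℝ) ≤ (k:ℝ) := by exact_mod_cast hk
  have hsk : (0:ℝ) < Real.sqrt k := Real.sqrt_pos.2 (by linarith)
  exact aux_arith _ _ _ _ _ hψpos hb hsk hchain
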